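/- For every n ≥ 1, the number of 110-avoiding ascent sequences of length 3n is at least n!. The witnessing family consists of sequences whose first n terms are 0,1,…,n−1, whose second n terms are again 0,1,…,n−1, and whose last n terms are an arbitrary permutation of n, n+1, …, 2n−1; each such sequence is a 110-avoiding ascent sequence. -/

import Mathlib

open Filter Topology

/-- Number of ascents in a sequence (list) of naturals. -/
def asc (s : List ℕ) : ℕ :=
  ((s.zip s.tail).filter (fun p => p.1 < p.2)).length

/-- `s` is an ascent sequence: first entry `0`, and each later entry is at most
one more than the number of ascents of the preceding prefix. -/
def IsAscentSeq (s : List ℕ) : Prop :=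
  (0 < s.length → s.getD 0 0 = 0) ∧
  ∀ i, 0 < i → i < s.length → s.getD i 0 ≤ asc (s.take i) + 1

/-- `s` is a weak ascent sequence: every entry is at most the number of ascents. -/
def IsWeakAscentSeq (s : List ℕ) : Prop :=
  ∀ x ∈ s, x ≤ asc s

/-- `s` contains the pattern `p`: some subsequence of `s` is order-isomorphic
(including equalities) to `p`. -/
def ContainsPattern (s p : List ℕ) : Prop :=
  ∃ idx : Fin p.length → ℕ, StrictMono idx ∧ (∀ a, idx a < s.length) ∧
    ∀ a b : Fin p.length, p.get a < p.get b ↔ s.getD (idx a) 0 < s.getD (idx b) 0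

def AvoidsPattern (s p : List ℕ) : Prop := ¬ ContainsPattern s p

/-- A pattern of length `j` is a permutation of `0,…,j-1`. -/
def IsPattern (p : List ℕ) : Prop := List.Perm p (List.range p.length)

/-- Sum-indecomposable: no proper prefix whose entries are all smaller than
all entries of the complementary suffix. -/
def SumIndecomposable (p : List ℕ) : Prop :=
  ¬ ∃ i, 0 < i ∧ i < p.length ∧ ∀ x ∈ p.take i, ∀ y ∈ p.drop i, x < y

/-- Number of `p`-avoiding ascent sequences of length `k`. -/
noncomputable def ascentAvoidCount (p : List ℕ) (k : ℕ) : ℕ :=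
  {s : List ℕ | s.length = k ∧ IsAscentSeq s ∧ AvoidsPattern s p}.ncard

/-- Number of `p`-avoiding weak ascent sequences of length `k`. -/
noncomputable def weakAvoidCount (p : List ℕ) (k : ℕ) : ℕ :=
  {s : List ℕ | s.length = k ∧ IsWeakAscentSeq s ∧ AvoidsPattern s p}.ncard

def listMax (s : List ℕ) : ℕ := s.foldr max 0
def listMin (s : List ℕ) : ℕ := s.foldr min (listMax s)

/-- Reverse-complement map: `m j = max + min - n (k+1-j)`. -/
def revComp (s : List ℕ) : List ℕ :=
  s.reverse.map (fun x => listMax s + listMin s - x)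

/-- Occurrence of pattern 000: three equal entries. -/
def Contains000 (s : List ℕ) : Prop :=
  ∃ a b c, a < b ∧ b < c ∧ c < s.length ∧
    s.getD a 0 = s.getD b 0 ∧ s.getD b 0 = s.getD c 0

/-- Occurrence of pattern 100: `n i₁ > n i₂ = n i₃`. -/
def Contains100 (s : List ℕ) : Prop :=
  ∃ a b c, a < b ∧ b < c ∧ c < s.length ∧
    s.getD b 0 < s.getD a 0 ∧ s.getD b 0 = s.getD c 0

/-- Occurrence of pattern 110: `n i₁ = n i₂ > n i₃`. -/
def Contains110 (s : List ℕ) : Prop :=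
  ∃ a b c, a < b ∧ b < c ∧ c < s.length ∧
    s.getD a 0 = s.getD b 0 ∧ s.getD c 0 < s.getD b 0

/-- Occurrence of pattern 120: `n i₂ > n i₁ > n i₃`. -/
def Contains120 (s : List ℕ) : Prop :=
  ∃ a b c, a < b ∧ b < c ∧ c < s.length ∧
    s.getD a 0 < s.getD b 0 ∧ s.getD c 0 < s.getD a 0

/-- Occurrence of pattern 201: `n i₁ > n i₃ > n i₂`. -/
def Contains201 (s : List ℕ) : Prop :=
  ∃ a b c, a < b ∧ b < c ∧ c < s.length ∧
    s.getD c 0 < s.getD a 0 ∧ s.getD b 0 < s.getD c 0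

/-- Occurrence of pattern 012: `n i₁ < n i₂ < n i₃`. -/
def Contains012 (s : List ℕ) : Prop :=
  ∃ a b c, a < b ∧ b < c ∧ c < s.length ∧
    s.getD a 0 < s.getD b 0 ∧ s.getD b 0 < s.getD c 0

/-- Occurrence of pattern 011: `n i₁ < n i₂ = n i₃`. -/
def Contains011 (s : List ℕ) : Prop :=
  ∃ a b c, a < b ∧ b < c ∧ c < s.length ∧
    s.getD a 0 < s.getD b 0 ∧ s.getD b 0 = s.getD c 0

/-- Occurrence of pattern 021: `n i₁ < n i₃ < n i₂`. -/
def Contains021 (s : List ℕ) : Prop :=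
  ∃ a b c, a < b ∧ b < c ∧ c < s.length ∧
    s.getD a 0 < s.getD c 0 ∧ s.getD c 0 < s.getD b 0

/-- Occurrence of pattern 102: `n i₂ < n i₁ < n i₃`. -/
def Contains102 (s : List ℕ) : Prop :=
  ∃ a b c, a < b ∧ b < c ∧ c < s.length ∧
    s.getD b 0 < s.getD a 0 ∧ s.getD a 0 < s.getD c 0

/-- The construction `C = 0101⋯01 W̃₁⋯W̃ₖ` from weak ascent sequences. -/
def buildC (k : ℕ) (W : Fin k → List ℕ) : List ℕ :=
  (List.replicate k ([0,1] : List ℕ)).flatten ++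
    (List.ofFn (fun h : Fin k =>
      (W h).map (fun x =>
        x + 1 + ∑ j ∈ Finset.univ.filter (fun j => j < h), listMax (W j)))).flatten

-- auxiliary lemmas -----------------------------------------------------------

lemma asc_cons_cons (a b : ℕ) (t : List ℕ) :
    asc (a :: b :: t) = (if a < b then 1 else 0) + asc (b :: t) := by
  unfold asc
  simp only [List.tail_cons, List.zip_cons_cons, List.filter_cons]
  by_cases h : a < b <;> simp [h, Nat.add_comm]

lemma asc_cons_le (a : ℕ) (s : List ℕ) : asc s ≤ asc (a :: s) := by
  cases s with
  | nil => simp [asc]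
  | cons b t => rw [asc_cons_cons]; omega

lemma asc_append_le : ∀ (A B : List ℕ), asc A + asc B ≤ asc (A ++ B)
  | [], B => by simp [asc]
  | [a], B => by simpa [asc] using asc_cons_le a B
  | a :: b :: t, B => by
    rw [List.cons_append, List.cons_append, asc_cons_cons, asc_cons_cons]
    have h := asc_append_le (b :: t) B
    rw [List.cons_append] at h
    by_cases hab : a < b <;> simp only [if_pos, if_neg, hab] <;> omega

lemma asc_le_length (s : List ℕ) : asc s ≤ s.length := by
  refine le_trans (List.length_filter_le _ _) ?_
  simp only [List.length_zip, List.length_tail]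
  omega

lemma asc_of_chain : ∀ s : List ℕ, List.Chain' (· < ·) s → asc s = s.length - 1
  | [], _ => rfl
  | [_], _ => rfl
  | a :: b :: t, h => by
    obtain ⟨h1, h2⟩ := List.isChain_cons_cons.mp h
    rw [asc_cons_cons, asc_of_chain (b :: t) h2, if_pos h1]
    simp only [List.length_cons]
    omega

lemma asc_range (m : ℕ) : asc (List.range m) = m - 1 := by
  rw [asc_of_chain _ ((List.pairwise_lt_range (n := m)).isChain), List.length_range]

lemma L_len (n : ℕ) (f : Fin n → ℕ) :
    (List.range n ++ List.range n ++ List.ofFn f).length = 3 * n := by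
  simp only [List.length_append, List.length_range, List.length_ofFn]
  omega

lemma L_getD₁ {n i : ℕ} (f : Fin n → ℕ) (h : i < n) :
    (List.range n ++ List.range n ++ List.ofFn f).getD i 0 = i := by
  rw [List.getD_append _ _ _ _ (by simp only [List.length_append, List.length_range]; omega),
    List.getD_append _ _ _ _ (by simpa using h),
    List.getD_eq_getElem _ _ (by simpa using h), List.getElem_range]

lemma L_getD₂ {n i : ℕ} (f : Fin n → ℕ) (h1 : n ≤ i) (h2 : i < 2 * n) :
    (List.range n ++ List.range n ++ List.ofFn f).getD i 0 = i - n := by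
  rw [List.getD_append _ _ _ _ (by simp only [List.length_append, List.length_range]; omega),
    List.getD_append_right _ _ _ _ (by simpa using h1),
    List.getD_eq_getElem _ _ (by simp only [List.length_range]; omega), List.getElem_range]
  simp

lemma L_getD₃ {n i : ℕ} (f : Fin n → ℕ) (h2 : 2 * n ≤ i) (h3 : i < 3 * n) :
    (List.range n ++ List.range n ++ List.ofFn f).getD i 0 = f ⟨i - 2 * n, by omega⟩ := by
  rw [List.getD_append_right _ _ _ _
      (by simp only [List.length_append, List.length_range]; omega),
    List.getD_eq_getElem _ _
      (by simp only [List.length_ofFn, List.length_append, List.length_range]; omega),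
    List.getElem_ofFn]
  congr 1
  apply Fin.ext
  simp only [List.length_append, List.length_range]
  omega

lemma asc_take_ge (n i : ℕ) (f : Fin n → ℕ) :
    (min i n - 1) + (min (i - n) n - 1) ≤
      asc ((List.range n ++ List.range n ++ List.ofFn f).take i) := by
  rw [List.take_append, List.take_append]
  simp only [List.take_range, List.length_range, List.length_append]
  calc (min i n - 1) + (min (i - n) n - 1)
      = asc (List.range (min i n)) + asc (List.range (min (i - n) n)) := by
        rw [asc_range, asc_range]
    _ ≤ asc (List.range (min i n) ++ List.range (min (i - n) n)) := asc_append_le _ _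
    _ ≤ asc (List.range (min i n) ++ List.range (min (i - n) n))
          + asc ((List.ofFn f).take (i - (n + n))) := Nat.le_add_right _ _
    _ ≤ _ := asc_append_le _ _

/-- At least `n!` 110-avoiding ascent sequences of length `3n`, witnessed by
`0,…,n-1, 0,…,n-1` followed by a permutation of `n,…,2n-1`. -/
theorem stmt8 (n : ℕ) (hn : 1 ≤ n) :
    (∀ σ : Equiv.Perm (Fin n),
      IsAscentSeq (List.range n ++ List.range n ++ List.ofFn (fun i => n + (σ i : ℕ))) ∧
      ¬ Contains110 (List.range n ++ List.range n ++ List.ofFn (fun i => n + (σ i : ℕ)))) ∧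
    Nat.factorial n ≤ {s : List ℕ | s.length = 3 * n ∧ IsAscentSeq s ∧ ¬ Contains110 s}.ncard := by
  have hmain : ∀ σ : Equiv.Perm (Fin n),
      IsAscentSeq (List.range n ++ List.range n ++ List.ofFn (fun i => n + (σ i : ℕ))) ∧
      ¬ Contains110 (List.range n ++ List.range n ++ List.ofFn (fun i => n + (σ i : ℕ))) := by
    intro σ
    have hlen := L_len n (fun i => n + (σ i : ℕ))
    constructor
    · constructor
      · intro _
        rw [L_getD₁ _ (by omega : 0 < n)]
      · intro i hi0 hil
        rw [hlen] at hil
        have hasc := asc_take_ge n i (fun i => n + (σ i : ℕ))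
        rcases lt_or_ge i n with h1 | h1
        · rw [L_getD₁ _ h1]; omega
        · rcases lt_or_ge i (2 * n) with h2 | h2
          · rw [L_getD₂ _ h1 h2]; omega
          · rw [L_getD₃ _ h2 (by omega)]
            have := (σ ⟨i - 2 * n, by omega⟩).isLt
            omega
    · rintro ⟨a, b, c, hab, hbc, hc, heq, hlt⟩
      rw [hlen] at hc
      rcases lt_or_ge a n with ha1 | ha1
      · rw [L_getD₁ _ ha1] at heq
        rcases lt_or_ge b n with hb1 | hb1
        · rw [L_getD₁ _ hb1] at heq
          omega
        · rcases lt_or_ge b (2 * n) with hb2 | hb2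
          · rw [L_getD₂ _ hb1 hb2] at heq hlt
            rcases lt_or_ge c (2 * n) with hc2 | hc2
            · rw [L_getD₂ _ (by omega) hc2] at hlt
              omega
            · rw [L_getD₃ _ hc2 hc] at hlt
              have := (σ ⟨c - 2 * n, by omega⟩).isLt
              omega
          · rw [L_getD₃ _ hb2 (by omega)] at heq
            omega
      · rcases lt_or_ge a (2 * n) with ha2 | ha2
        · rw [L_getD₂ _ ha1 ha2] at heq
          rcases lt_or_ge b (2 * n) with hb2 | hb2
          · rw [L_getD₂ _ (by omega) hb2] at heq
            omega
          · rw [L_getD₃ _ hb2 (by omega)] at heq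
            omega
        · rw [L_getD₃ _ ha2 (by omega), L_getD₃ _ (by omega : 2*n ≤ b) (by omega)] at heq
          have key := congrArg Fin.val (σ.injective (Fin.val_injective
            (Nat.add_left_cancel heq)))
          simp only [] at key
          omega
  refine ⟨hmain, ?_⟩
  set S : Set (List ℕ) := {s | s.length = 3 * n ∧ IsAscentSeq s ∧ ¬ Contains110 s} with hS
  have hBound : ∀ s ∈ S, ∀ i : ℕ, s.getD i 0 ≤ 3 * n := by
    rintro s ⟨hl, ⟨h0, hstep⟩, -⟩ i
    by_cases hil : i < s.length
    · rcases Nat.eq_zero_or_pos i with rfl | hi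
      · rw [h0 (by omega)]
        exact Nat.zero_le _
      · have h1 := hstep i hi hil
        have h2 := asc_le_length (s.take i)
        rw [List.length_take] at h2
        omega
    · rw [List.getD_eq_default _ _ (by omega)]
      exact Nat.zero_le _
  have hfin : S.Finite := by
    have hinj2 : Function.Injective (fun s : S => fun i : Fin (3 * n) =>
        (⟨s.1.getD i 0, Nat.lt_succ_of_le (hBound s.1 s.2 i)⟩ : Fin (3 * n + 1))) := by
      intro s t h
      apply Subtype.ext
      apply List.ext_getElem (by rw [s.2.1, t.2.1])
      intro i h1 h2
      have h3 := congrFun h ⟨i, by rw [s.2.1] at h1; omega⟩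
      simp only [Fin.mk.injEq] at h3
      rw [← List.getD_eq_getElem _ 0 h1, ← List.getD_eq_getElem _ 0 h2]
      exact h3
    exact Set.finite_coe_iff.mp (Finite.of_injective _ hinj2)
  have hinj : Function.Injective (fun σ : Equiv.Perm (Fin n) =>
      List.range n ++ List.range n ++ List.ofFn (fun i => n + (σ i : ℕ))) := by
    intro σ τ h
    have h2 := List.append_cancel_left h
    have h3 := List.ofFn_injective h2
    apply Equiv.ext
    intro i
    have h4 := congrFun h3 i
    exact Fin.val_injective (Nat.add_left_cancel h4)
  have hsub : Set.range (fun σ : Equiv.Perm (Fin n) =>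
      List.range n ++ List.range n ++ List.ofFn (fun i => n + (σ i : ℕ))) ⊆ S := by
    rintro _ ⟨σ, rfl⟩
    exact ⟨L_len _ _, (hmain σ).1, (hmain σ).2⟩
  calc Nat.factorial n = Nat.card (Equiv.Perm (Fin n)) := by
        simp [Nat.card_eq_fintype_card, Fintype.card_perm]
    _ = (Set.univ : Set (Equiv.Perm (Fin n))).ncard := (Set.ncard_univ _).symm
    _ = (Set.range (fun σ : Equiv.Perm (Fin n) =>
          List.range n ++ List.range n ++ List.ofFn (fun i => n + (σ i : ℕ)))).ncard := by
        rw [← Set.image_univ, Set.ncard_image_of_injective _ hinj]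
    _ ≤ S.ncard := Set.ncard_le_ncard hsub hfin
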